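/- Upper bound version of the previous lemma: if (1-δ)L ⪯ L̃ ⪯ (1+δ)L with L, L̃ sharing the same kernel, then R(u,v) ≤ (1+δ)² · R̂(u,v) where R̂(u,v) = ‖W^{1/2} B L̃⁺(χ_u − χ_v)‖² and R(u,v) = (χ_u − χ_v)ᵀL⁺(χ_u − χ_v). -/

import Mathlib

open Matrix

def IsMoorePenrose {n : ℕ} (A P : Matrix (Fin n) (Fin n) ℝ) : Prop :=
  A * P * A = A ∧ P * A * P = P ∧ (A * P)ᵀ = A * P ∧ (P * A)ᵀ = P * A

lemma mp_unique {n : ℕ} {A P Q : Matrix (Fin n) (Fin n) ℝ}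
    (hP : IsMoorePenrose A P) (hQ : IsMoorePenrose A Q) : P = Q := by
  obtain ⟨p1, p2, p3, p4⟩ := hP
  obtain ⟨q1, q2, q3, q4⟩ := hQ
  have hAP : A * P = A * Q := by
    calc A * P = (A * P)ᵀ := p3.symm
      _ = ((A * Q * A) * P)ᵀ := by rw [q1]
      _ = ((A * Q) * (A * P))ᵀ := by rw [mul_assoc (A * Q)]
      _ = (A * P)ᵀ * (A * Q)ᵀ := transpose_mul _ _
      _ = (A * P) * (A * Q) := by rw [p3, q3]
      _ = (A * P * A) * Q := by simp only [mul_assoc]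
      _ = A * Q := by rw [p1]
  have hPA : P * A = Q * A := by
    calc P * A = (P * A)ᵀ := p4.symm
      _ = (P * (A * Q * A))ᵀ := by rw [q1]
      _ = ((P * A) * (Q * A))ᵀ := by simp only [mul_assoc]
      _ = (Q * A)ᵀ * (P * A)ᵀ := transpose_mul _ _
      _ = (Q * A) * (P * A) := by rw [p4, q4]
      _ = Q * (A * P * A) := by simp only [mul_assoc]
      _ = Q * A := by rw [p1]
  calc P = P * A * P := p2.symm
    _ = Q * A * P := by rw [hPA]
    _ = Q * (A * P) := by rw [mul_assoc]
    _ = Q * (A * Q) := by rw [hAP]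
    _ = Q * A * Q := by rw [mul_assoc]
    _ = Q := q2

lemma mp_symm {n : ℕ} {A P : Matrix (Fin n) (Fin n) ℝ}
    (hA : Aᵀ = A) (hP : IsMoorePenrose A P) : Pᵀ = P := by
  obtain ⟨p1, p2, p3, p4⟩ := hP
  have hPt : IsMoorePenrose A Pᵀ := by
    refine ⟨?_, ?_, ?_, ?_⟩
    · have := congrArg Matrix.transpose p1
      simpa [transpose_mul, hA, mul_assoc] using this
    · have := congrArg Matrix.transpose p2
      simpa [transpose_mul, hA, mul_assoc] using this
    · have e3 : A * Pᵀ = P * A := by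
        calc A * Pᵀ = Aᵀ * Pᵀ := by rw [hA]
          _ = (P * A)ᵀ := (transpose_mul P A).symm
          _ = P * A := p4
      rw [e3]; exact p4
    · have e4 : Pᵀ * A = A * P := by
        calc Pᵀ * A = Pᵀ * Aᵀ := by rw [hA]
          _ = (A * P)ᵀ := (transpose_mul A P).symm
          _ = A * P := p3
      rw [e4]; exact p3
  exact mp_unique hPt ⟨p1, p2, p3, p4⟩

lemma psd_cs {n : ℕ} {M : Matrix (Fin n) (Fin n) ℝ} (hM : M.PosSemidef)
    (a b : Fin n → ℝ) :
    (a ⬝ᵥ M.mulVec b) ^ 2 ≤ (a ⬝ᵥ M.mulVec a) * (b ⬝ᵥ M.mulVec b) := by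
  have hMs : Mᵀ = M := by simpa using hM.1.eq
  have hswap : b ⬝ᵥ M.mulVec a = a ⬝ᵥ M.mulVec b := by
    rw [dotProduct_mulVec, ← mulVec_transpose, hMs, dotProduct_comm]
  have hq : ∀ t : ℝ, 0 ≤ (b ⬝ᵥ M.mulVec b) * (t * t) + (2 * (a ⬝ᵥ M.mulVec b)) * t
      + (a ⬝ᵥ M.mulVec a) := by
    intro t
    have h0 := hM.dotProduct_mulVec_nonneg (a + t • b)
    simp only [star_trivial] at h0
    have : (a + t • b) ⬝ᵥ M.mulVec (a + t • b)
        = (b ⬝ᵥ M.mulVec b) * (t * t) + (2 * (a ⬝ᵥ M.mulVec b)) * t + (a ⬝ᵥ M.mulVec a) := by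
      simp [Matrix.mulVec_add, Matrix.mulVec_smul, dotProduct_add, add_dotProduct,
        dotProduct_smul, smul_dotProduct, smul_eq_mul]
      rw [hswap]; ring
    rw [this] at h0; linarith
  have hd := discrim_le_zero hq
  rw [discrim] at hd
  nlinarith [hd]

lemma quad_eq {m n : ℕ} (B : Matrix (Fin m) (Fin n) ℝ) (w : Fin m → ℝ) (x : Fin n → ℝ) :
    x ⬝ᵥ (Bᵀ * Matrix.diagonal w * B).mulVec x = ∑ e, w e * (B.mulVec x e) ^ 2 := by
  rw [Matrix.mul_assoc, ← mulVec_mulVec, dotProduct_mulVec, ← mulVec_transpose, transpose_transpose,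
    ← mulVec_mulVec]
  simp [dotProduct, mulVec_diagonal]
  exact Finset.sum_congr rfl fun e _ => by ring

/-- If `(1-δ)L ⪯ L̃ ⪯ (1+δ)L` with `L, L̃` sharing the same kernel, then
`R(u,v) ≤ (1+δ)² · R̂(u,v)` where `R̂(u,v) = ‖W^{1/2} B L̃⁺ (χ_u - χ_v)‖²`. -/
theorem stmt_7 {m n : ℕ} (B : Matrix (Fin m) (Fin n) ℝ) (w : Fin m → ℝ)
    (hw : ∀ e, 0 < w e)
    (hB : ∀ e : Fin m, ∃ i j : Fin n, i ≠ j ∧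
      (fun k => B e k) = (Pi.single i 1 - Pi.single j 1 : Fin n → ℝ))
    (L Lp Lt Ltp : Matrix (Fin n) (Fin n) ℝ) (δ : ℝ)
    (hδ0 : 0 ≤ δ) (hδ1 : δ < 1)
    (hL : L = Bᵀ * Matrix.diagonal w * B)
    (hconn : ∀ x : Fin n → ℝ, L.mulVec x = 0 ↔ ∃ c : ℝ, ∀ k, x k = c)
    (hLt : Lt.PosSemidef)
    (hker : ∀ x : Fin n → ℝ, Lt.mulVec x = 0 ↔ L.mulVec x = 0)
    (h₁ : ∀ x : Fin n → ℝ, (1 - δ) * (x ⬝ᵥ L.mulVec x) ≤ x ⬝ᵥ Lt.mulVec x)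
    (h₂ : ∀ x : Fin n → ℝ, x ⬝ᵥ Lt.mulVec x ≤ (1 + δ) * (x ⬝ᵥ L.mulVec x))
    (hLp : IsMoorePenrose L Lp) (hLtp : IsMoorePenrose Lt Ltp) :
    ∀ u v : Fin n,
      (Pi.single u 1 - Pi.single v 1) ⬝ᵥ Lp.mulVec (Pi.single u 1 - Pi.single v 1) ≤
        (1 + δ) ^ 2 *
          ∑ e : Fin m,
            ((Matrix.diagonal (fun e => Real.sqrt (w e)) * B * Ltp).mulVec
              (Pi.single u 1 - Pi.single v 1) e) ^ 2 := by
  intro u v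
  set χ : Fin n → ℝ := Pi.single u 1 - Pi.single v 1 with hχdef
  have hLsym : Lᵀ = L := by
    rw [hL]; simp [transpose_mul, Matrix.mul_assoc]
  have hLtsym : Ltᵀ = Lt := by simpa using hLt.1.eq
  have hLpsym : Lpᵀ = Lp := mp_symm hLsym hLp
  have hLtpsym : Ltpᵀ = Ltp := mp_symm hLtsym hLtp
  obtain ⟨p1, p2, p3, p4⟩ := hLp
  obtain ⟨q1, q2, q3, q4⟩ := hLtp
  have hone : L.mulVec (fun _ => (1:ℝ)) = 0 := (hconn _).mpr ⟨1, fun _ => rfl⟩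
  have honeLt : Lt.mulVec (fun _ => (1:ℝ)) = 0 := (hker _).mpr hone
  set y : Fin n → ℝ := Ltp.mulVec χ with hy
  set z : Fin n → ℝ := Lp.mulVec χ with hz
  have hid : ∀ x : Fin n → ℝ, x ⬝ᵥ L.mulVec x = ∑ e, w e * (B.mulVec x e) ^ 2 := by
    intro x; rw [hL]; exact quad_eq B w x
  -- commutation Lt * Ltp = Ltp * Lt
  have hcomm : Lt * Ltp = Ltp * Lt := by
    calc Lt * Ltp = (Lt * Ltp)ᵀ := q3.symm
      _ = Ltpᵀ * Ltᵀ := transpose_mul _ _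
      _ = Ltp * Lt := by rw [hLtpsym, hLtsym]
  have hLtLtLtp : Lt * (Lt * Ltp) = Lt := by
    rw [hcomm, ← Matrix.mul_assoc]; exact q1
  have hχsum : ∑ k, χ k = 0 := by
    simp [hχdef, Finset.sum_sub_distrib, Finset.sum_pi_single']
  -- projection : Lt *ᵥ y = χ
  have hproj : Lt.mulVec y = χ := by
    set r : Fin n → ℝ := χ - Lt.mulVec y with hr
    have hLty : Lt.mulVec y = (Lt * Ltp).mulVec χ := by
      rw [hy, mulVec_mulVec]
    have hLtr : Lt.mulVec r = 0 := by
      rw [hr, Matrix.mulVec_sub, hLty, mulVec_mulVec, hLtLtLtp, sub_self]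
    obtain ⟨c, hc⟩ := (hconn r).mp ((hker r).mp hLtr)
    have hsum1 : ∑ k, (Lt.mulVec y) k = 0 := by
      have h1 : (fun _ => (1:ℝ)) ᵥ* Lt = 0 := by
        rw [← mulVec_transpose, hLtsym]; exact honeLt
      have : ∑ k, (Lt.mulVec y) k = (fun _ => (1:ℝ)) ⬝ᵥ (Lt * Ltp).mulVec χ := by
        rw [← hLty]; simp [dotProduct]
      rw [this, dotProduct_mulVec, ← vecMul_vecMul, h1]
      simp
    have hsumr : ∑ k, r k = 0 := by
      rw [hr]; simp [Finset.sum_sub_distrib, hχsum, hsum1]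
    have hc0 : c = 0 := by
      have hn : (0:ℕ) < n := Fin.pos u
      have : (n : ℝ) * c = 0 := by
        rw [← hsumr]
        simp [hc, Finset.sum_const, mul_comm]
      have hn' : (n : ℝ) ≠ 0 := Nat.cast_ne_zero.mpr hn.ne'
      exact (mul_eq_zero.mp this).resolve_left hn'
    have hr0 : r = 0 := funext fun k => by rw [hc k, hc0]; rfl
    exact (sub_eq_zero.mp (hr.symm.trans hr0)).symm
  -- R identity : z ⬝ᵥ L *ᵥ z = χ ⬝ᵥ z
  have key : ∀ a : Fin n → ℝ, (Lp.mulVec χ) ⬝ᵥ a = χ ⬝ᵥ (Lp.mulVec a) := by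
    intro a
    rw [dotProduct_comm, dotProduct_mulVec, ← mulVec_transpose, hLpsym, dotProduct_comm]
  have hRz : z ⬝ᵥ L.mulVec z = χ ⬝ᵥ z := by
    show (Lp.mulVec χ) ⬝ᵥ (L.mulVec (Lp.mulVec χ)) = χ ⬝ᵥ (Lp.mulVec χ)
    rw [key (L.mulVec (Lp.mulVec χ)), mulVec_mulVec, mulVec_mulVec, p2]
  -- sum identity
  have hS : ∑ e : Fin m, ((Matrix.diagonal (fun e => Real.sqrt (w e)) * B * Ltp).mulVec χ e) ^ 2
      = y ⬝ᵥ L.mulVec y := by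
    rw [hid y]
    refine Finset.sum_congr rfl fun e _ => ?_
    have h1 : (Matrix.diagonal (fun e => Real.sqrt (w e)) * B * Ltp).mulVec χ e
        = Real.sqrt (w e) * (B.mulVec y e) := by
      rw [Matrix.mul_assoc, ← mulVec_mulVec, ← mulVec_mulVec]
      simp [mulVec_diagonal, hy]
    rw [h1, mul_pow, Real.sq_sqrt (hw e).le]
  rw [hS]
  -- main estimates
  have cs := psd_cs hLt z y
  have hkey : z ⬝ᵥ Lt.mulVec y = χ ⬝ᵥ z := by rw [hproj, dotProduct_comm]
  have hz2 : z ⬝ᵥ Lt.mulVec z ≤ (1 + δ) * (χ ⬝ᵥ z) := by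
    have := h₂ z; rw [hRz] at this; exact this
  have hy2 : y ⬝ᵥ Lt.mulVec y ≤ (1 + δ) * (y ⬝ᵥ L.mulVec y) := h₂ y
  have hznn : 0 ≤ z ⬝ᵥ Lt.mulVec z := hLt.dotProduct_mulVec_nonneg z
  have hynn : 0 ≤ y ⬝ᵥ Lt.mulVec y := hLt.dotProduct_mulVec_nonneg y
  have hsnn : 0 ≤ y ⬝ᵥ L.mulVec y := by
    rw [hid y]
    exact Finset.sum_nonneg fun e _ => mul_nonneg (hw e).le (sq_nonneg _)
  have hRnn : 0 ≤ χ ⬝ᵥ z := by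
    rw [← hRz, hid z]
    exact Finset.sum_nonneg fun e _ => mul_nonneg (hw e).le (sq_nonneg _)
  show χ ⬝ᵥ z ≤ (1 + δ) ^ 2 * (y ⬝ᵥ L.mulVec y)
  rcases hRnn.lt_or_eq with hpos | heq
  · nlinarith [cs, hz2, hy2, hznn, hynn, hsnn, hδ0, hkey,
      mul_le_mul hz2 hy2 hynn (by nlinarith : (0:ℝ) ≤ (1 + δ) * (χ ⬝ᵥ z))]
  · rw [← heq]
    positivity
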